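/- If R = R¹⊗R²⊗R³ ∈ A⊗A⊗A satisfies the centralizing condition R¹⊗aR²⊗R³ = R¹⊗R²⊗R³a for all a ∈ A and the normalizing conditions R¹R²⊗R³ = 1⊗1 and R²⊗R³R¹ = 1⊗1, then R is invariant under cyclic permutation of the tensor factors: R¹⊗R²⊗R³ = R²⊗R³⊗R¹ = R³⊗R¹⊗R². -/

import Mathlib

open TensorProduct

/-- If `R = ∑ᵢ xᵢ ⊗ yᵢ ⊗ zᵢ ∈ A ⊗ A ⊗ A` satisfies the centralizing
condition `R¹ ⊗ aR² ⊗ R³ = R¹ ⊗ R² ⊗ R³a` for all `a ∈ A` and the normalizing conditions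
`R¹R² ⊗ R³ = 1 ⊗ 1` and `R² ⊗ R³R¹ = 1 ⊗ 1`, then `R` is invariant under cyclic
permutation of the tensor factors. -/
theorem cyclic_invariance_of_R_matrix
    (k A : Type*) [CommRing k] [Ring A] [Algebra k A]
    (ι : Type*) (s : Finset ι) (x y z : ι → A)
    (hcen : ∀ a : A,
      ∑ i ∈ s, x i ⊗ₜ[k] (a * y i) ⊗ₜ[k] z i
        = ∑ i ∈ s, x i ⊗ₜ[k] y i ⊗ₜ[k] (z i * a))
    (hnorm1 : ∑ i ∈ s, (x i * y i) ⊗ₜ[k] z i = (1 : A) ⊗ₜ[k] (1 : A))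
    (hnorm2 : ∑ i ∈ s, y i ⊗ₜ[k] (z i * x i) = (1 : A) ⊗ₜ[k] (1 : A)) :
    (∑ i ∈ s, x i ⊗ₜ[k] y i ⊗ₜ[k] z i = ∑ i ∈ s, y i ⊗ₜ[k] z i ⊗ₜ[k] x i) ∧
    (∑ i ∈ s, x i ⊗ₜ[k] y i ⊗ₜ[k] z i = ∑ i ∈ s, z i ⊗ₜ[k] x i ⊗ₜ[k] y i) := by
  -- (★★): ∑ (x i * a * y i) ⊗ z i = 1 ⊗ a
  have star2 : ∀ a : A,
      ∑ i ∈ s, (x i * (a * y i)) ⊗ₜ[k] z i = (1 : A) ⊗ₜ[k] a := by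
    intro a
    have h := congrArg
      (TensorProduct.map (LinearMap.mul' k A) LinearMap.id) (hcen a)
    simp only [map_sum, LinearMap.comp_apply, LinearEquiv.coe_coe, assoc_symm_tmul,
      map_tmul, LinearMap.mul'_apply, LinearMap.id_coe, id_eq] at h
    have h2 := congrArg (TensorProduct.map LinearMap.id (LinearMap.mulRight k a)) hnorm1
    simp only [map_sum, map_tmul, LinearMap.id_coe, id_eq, LinearMap.mulRight_apply,
      one_mul] at h2
    rw [h, h2]
  -- (★): ∑ y i ⊗ (z i * a * x i) = a ⊗ 1
  have star1 : ∀ a : A,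
      ∑ i ∈ s, y i ⊗ₜ[k] (z i * a * x i) = a ⊗ₜ[k] (1 : A) := by
    intro a
    have h := congrArg
      ((TensorProduct.map LinearMap.id (LinearMap.mul' k A)).comp
        (((TensorProduct.assoc k A A A).toLinearMap).comp
          ((TensorProduct.comm k A (A ⊗[k] A)).toLinearMap.comp
            (TensorProduct.assoc k A A A).toLinearMap))) (hcen a)
    simp only [map_sum, LinearMap.comp_apply, LinearEquiv.coe_coe, comm_tmul, assoc_tmul,
      map_tmul, LinearMap.mul'_apply, LinearMap.id_coe, id_eq] at h
    have h2 := congrArg (TensorProduct.map (LinearMap.mulLeft k a) LinearMap.id) hnorm2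
    simp only [map_sum, map_tmul, LinearMap.id_coe, id_eq, LinearMap.mulLeft_apply,
      mul_one] at h2
    rw [← h, h2]
  -- expand R using (★) at a = x i
  have e1 : ∑ i ∈ s, x i ⊗ₜ[k] y i ⊗ₜ[k] z i
      = ∑ i ∈ s, ∑ j ∈ s, y j ⊗ₜ[k] (z j * x i * x j * y i) ⊗ₜ[k] z i := by
    refine Finset.sum_congr rfl fun i _ => ?_
    have h := congrArg (TensorProduct.map LinearMap.id
        (((TensorProduct.mk k A A).flip (z i)).comp (LinearMap.mulRight k (y i))))
      (star1 (x i))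
    simp only [map_sum, map_tmul, LinearMap.id_coe, id_eq, LinearMap.comp_apply,
      LinearMap.mulRight_apply, LinearMap.flip_apply, TensorProduct.mk_apply,
      one_mul] at h
    have h' := congrArg (TensorProduct.assoc k A A A).symm h
    simp only [map_sum, assoc_symm_tmul] at h'
    exact h'.symm
  -- contract using (★★) at a = x j
  have e2 : ∀ j ∈ s, ∑ i ∈ s, y j ⊗ₜ[k] (z j * x i * x j * y i) ⊗ₜ[k] z i
      = y j ⊗ₜ[k] z j ⊗ₜ[k] x j := by
    intro j _
    have h := congrArg
      (((TensorProduct.mk k A (A ⊗[k] A)) (y j)).comp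
        (TensorProduct.map (LinearMap.mulLeft k (z j)) LinearMap.id)) (star2 (x j))
    simp only [map_sum, LinearMap.comp_apply, map_tmul, LinearMap.mulLeft_apply,
      LinearMap.id_coe, id_eq, TensorProduct.mk_apply, mul_one] at h
    have h' := congrArg (TensorProduct.assoc k A A A).symm h
    simp only [map_sum, assoc_symm_tmul] at h'
    simpa only [mul_assoc] using h'
  have eq1 : ∑ i ∈ s, x i ⊗ₜ[k] y i ⊗ₜ[k] z i
      = ∑ i ∈ s, y i ⊗ₜ[k] z i ⊗ₜ[k] x i := by
    rw [e1, Finset.sum_comm]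
    exact Finset.sum_congr rfl e2
  refine ⟨eq1, eq1.trans ?_⟩
  have h := congrArg
    (((TensorProduct.comm k A (A ⊗[k] A)).toLinearMap).comp
      (TensorProduct.assoc k A A A).toLinearMap) eq1
  simpa only [map_sum, LinearMap.comp_apply, LinearEquiv.coe_coe, comm_tmul,
    assoc_tmul] using h
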